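/- arXiv:2605.11466 — 2 statements merged into one kernel-verified Lean document; each statement's English description precedes it below -/
import Mathlib

section
/- The circulant graphs C₃₂({3,6,13}) and C₃₂({5,6,11}) are isomorphic as simple graphs, but they are not Adám isomorphic: for every unit x of ℤ/32ℤ, x·({3,6,13} ∪ -{3,6,13}) ≠ {5,6,11} ∪ -{5,6,11} as subsets of ℤ/32ℤ. -/
open Pointwise

/-- The circulant graph `Cₙ(R)`: vertices are `ZMod n`, and distinct `u v` are
adjacent iff `u - v ∈ R` or `v - u ∈ R`. -/
def circulantGraph (n : ℕ) (R : Set (ZMod n)) : SimpleGraph (ZMod n) where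
  Adj u v := u ≠ v ∧ (u - v ∈ R ∨ v - u ∈ R)
  symm := ⟨fun u v h => ⟨h.1.symm, h.2.symm⟩⟩
  loopless := ⟨fun u h => h.1 rfl⟩

instance decMem1 : DecidablePred (· ∈ ({3,6,13} : Set (ZMod 32))) :=
  fun x => decidable_of_iff (x = 3 ∨ x = 6 ∨ x = 13) (by simp)

instance decMem2 : DecidablePred (· ∈ ({5,6,11} : Set (ZMod 32))) :=
  fun x => decidable_of_iff (x = 5 ∨ x = 6 ∨ x = 11) (by simp)

def myf : ZMod 32 → ZMod 32 := fun x => x + 8 * (x.val % 2 : ℕ)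
def myg : ZMod 32 → ZMod 32 := fun x => x + 24 * (x.val % 2 : ℕ)

def myEquiv : ZMod 32 ≃ ZMod 32 where
  toFun := myf
  invFun := myg
  left_inv := by decide
  right_inv := by decide

instance : DecidableRel (circulantGraph 32 ({3,6,13} : Set (ZMod 32))).Adj :=
  fun u v => decidable_of_iff
    (u ≠ v ∧ (u - v ∈ ({3,6,13} : Set (ZMod 32)) ∨ v - u ∈ ({3,6,13} : Set (ZMod 32)))) Iff.rfl

instance : DecidableRel (circulantGraph 32 ({5,6,11} : Set (ZMod 32))).Adj :=
  fun u v => decidable_of_iff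
    (u ≠ v ∧ (u - v ∈ ({5,6,11} : Set (ZMod 32)) ∨ v - u ∈ ({5,6,11} : Set (ZMod 32)))) Iff.rfl

lemma mapiff : ∀ a b : ZMod 32,
    (circulantGraph 32 {5, 6, 11}).Adj (myEquiv a) (myEquiv b) ↔ (circulantGraph 32 {3, 6, 13}).Adj a b := by
  decide

lemma key : ∀ x : (ZMod 32)ˣ, ∃ a : ZMod 32,
    ¬ ((∃ r : ZMod 32, ((r = 3 ∨ r = 6 ∨ r = 13) ∨ -r = 3 ∨ -r = 6 ∨ -r = 13) ∧ (x : ZMod 32) * r = a) ↔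
       ((a = 5 ∨ a = 6 ∨ a = 11) ∨ -a = 5 ∨ -a = 6 ∨ -a = 11)) := by decide
theorem stmt5 :
    Nonempty (circulantGraph 32 ({3,6,13} : Set (ZMod 32)) ≃g circulantGraph 32 ({5,6,11} : Set (ZMod 32))) ∧
    ∀ x : (ZMod 32)ˣ,
      (fun r => (x : ZMod 32) * r) '' (({3,6,13} : Set (ZMod 32)) ∪ -({3,6,13} : Set (ZMod 32))) ≠ ({5,6,11} : Set (ZMod 32)) ∪ -({5,6,11} : Set (ZMod 32)) := by
  constructor
  · exact ⟨{ toEquiv := myEquiv, map_rel_iff' := mapiff _ _ }⟩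
  · intro x h
    obtain ⟨a, ha⟩ := key x
    have h' := Set.ext_iff.mp h a
    simp only [Set.mem_union, Set.mem_image, Set.mem_insert_iff, Set.mem_singleton_iff,
      Set.mem_neg] at h'
    exact ha h'
end

section
/- The circulant graphs C₃₂({1,2,4,15}) and C₃₂({2,4,7,9}) are isomorphic as simple graphs, but they are not Adám isomorphic: for every unit x of ℤ/32ℤ, x·({1,2,4,15} ∪ -{1,2,4,15}) ≠ {2,4,7,9} ∪ -{2,4,7,9} as subsets of ℤ/32ℤ. -/
open Pointwise

private def f32 : ZMod 32 → ZMod 32 := fun v => if v.val % 2 = 0 then -v else 8 - v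

private def e32 : ZMod 32 ≃ ZMod 32 where
  toFun := f32
  invFun := f32
  left_inv := by decide
  right_inv := by decide

private lemma adjkey : ∀ a b : ZMod 32,
    ((f32 a ≠ f32 b ∧ ((f32 a - f32 b = 2 ∨ f32 a - f32 b = 4 ∨ f32 a - f32 b = 7 ∨ f32 a - f32 b = 9) ∨
      (f32 b - f32 a = 2 ∨ f32 b - f32 a = 4 ∨ f32 b - f32 a = 7 ∨ f32 b - f32 a = 9))) ↔
     (a ≠ b ∧ ((a - b = 1 ∨ a - b = 2 ∨ a - b = 4 ∨ a - b = 15) ∨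
      (b - a = 1 ∨ b - a = 2 ∨ b - a = 4 ∨ b - a = 15)))) := by decide

private lemma unitkey : ∀ y : ZMod 32,
    ((y = 2 ∨ y = 4 ∨ y = 7 ∨ y = 9) ∨ (-y = 2 ∨ -y = 4 ∨ -y = 7 ∨ -y = 9)) →
    ((y*2 = 2 ∨ y*2 = 4 ∨ y*2 = 7 ∨ y*2 = 9) ∨ (-(y*2) = 2 ∨ -(y*2) = 4 ∨ -(y*2) = 7 ∨ -(y*2) = 9)) →
    ((y*4 = 2 ∨ y*4 = 4 ∨ y*4 = 7 ∨ y*4 = 9) ∨ (-(y*4) = 2 ∨ -(y*4) = 4 ∨ -(y*4) = 7 ∨ -(y*4) = 9)) →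
    False := by decide

theorem stmt18 :
    Nonempty (circulantGraph 32 ({1,2,4,15} : Set (ZMod 32)) ≃g circulantGraph 32 ({2,4,7,9} : Set (ZMod 32))) ∧
    ∀ x : (ZMod 32)ˣ,
      (fun r => (x : ZMod 32) * r) '' (({1,2,4,15} : Set (ZMod 32)) ∪ -({1,2,4,15} : Set (ZMod 32))) ≠ ({2,4,7,9} : Set (ZMod 32)) ∪ -({2,4,7,9} : Set (ZMod 32)) := by
  constructor
  · refine ⟨⟨e32, ?_⟩⟩
    intro a b
    have := adjkey a b
    simp only [circulantGraph, Set.mem_insert_iff, Set.mem_singleton_iff]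
    exact this
  · intro x h
    have m1 : (x : ZMod 32) ∈ (({2,4,7,9} : Set (ZMod 32)) ∪ -({2,4,7,9} : Set (ZMod 32))) := by
      rw [← h]; exact ⟨1, Or.inl (by simp), mul_one _⟩
    have m2 : (x : ZMod 32) * 2 ∈ (({2,4,7,9} : Set (ZMod 32)) ∪ -({2,4,7,9} : Set (ZMod 32))) := by
      rw [← h]; exact ⟨2, Or.inl (by simp), rfl⟩
    have m4 : (x : ZMod 32) * 4 ∈ (({2,4,7,9} : Set (ZMod 32)) ∪ -({2,4,7,9} : Set (ZMod 32))) := by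
      rw [← h]; exact ⟨4, Or.inl (by simp), rfl⟩
    simp only [Set.mem_union, Set.mem_insert_iff, Set.mem_singleton_iff, Set.mem_neg] at m1 m2 m4
    exact unitkey _ m1 m2 m4
end
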